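/- arXiv:2306.01535 — 3 statements merged into one kernel-verified Lean document; each statement's English description precedes it below -/
import Mathlib

section
/- Let α ≥ 0, η > 0, T ∈ ℝ, γ = √(α² + 2η²), and define B : ℝ → ℝ by B(t) = 2(e^{γ(T−t)} − 1) / ((α + γ)(e^{γ(T−t)} − 1) + 2γ). Then B is differentiable on ℝ, satisfies the Riccati ordinary differential equation B′(t) = (1/2)η² B(t)² + α B(t) − 1 for all t ∈ ℝ, and satisfies the terminal condition B(T) = 0. -/
/-- The CIR coefficient `B(t) = 2(e^{γ(T−t)} − 1) / ((α + γ)(e^{γ(T−t)} − 1) + 2γ)`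
is differentiable on `ℝ`, satisfies the Riccati ODE
`B′(t) = (1/2)η² B(t)² + α B(t) − 1`, and the terminal condition `B(T) = 0`. -/
theorem cir_B_riccati (α η T : ℝ) (hα : 0 ≤ α) (hη : 0 < η)
    (γ : ℝ) (hγ : γ = Real.sqrt (α ^ 2 + 2 * η ^ 2)) (B : ℝ → ℝ)
    (hB : ∀ t : ℝ, B t = 2 * (Real.exp (γ * (T - t)) - 1) /
      ((α + γ) * (Real.exp (γ * (T - t)) - 1) + 2 * γ)) :
    (∀ t : ℝ, HasDerivAt B ((1 / 2) * η ^ 2 * (B t) ^ 2 + α * B t - 1) t) ∧ B T = 0 := by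
  have hγ2 : γ ^ 2 = α ^ 2 + 2 * η ^ 2 := by
    rw [hγ]; exact Real.sq_sqrt (by positivity)
  have hγpos : 0 < γ := by
    rw [hγ]; exact Real.sqrt_pos.mpr (by positivity)
  have hγα : α < γ := by nlinarith
  have hDpos : ∀ t : ℝ, 0 < (α + γ) * (Real.exp (γ * (T - t)) - 1) + 2 * γ := by
    intro t
    have hE := Real.exp_pos (γ * (T - t))
    nlinarith [mul_pos (show (0:ℝ) < α + γ by linarith) hE]
  constructor
  · intro t
    set E : ℝ := Real.exp (γ * (T - t)) with hE
    have hEpos : 0 < E := Real.exp_pos _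
    have hD := hDpos t
    have hf : HasDerivAt (fun s : ℝ => γ * (T - s)) (-γ) t := by
      have := ((hasDerivAt_id t).const_sub T).const_mul γ
      simpa using this
    have hexp : HasDerivAt (fun s : ℝ => Real.exp (γ * (T - s))) (E * (-γ)) t := hf.exp
    have hnum : HasDerivAt (fun s : ℝ => 2 * (Real.exp (γ * (T - s)) - 1))
        (2 * (E * (-γ))) t := ((hexp.sub_const 1).const_mul 2)
    have hden : HasDerivAt (fun s : ℝ =>
        (α + γ) * (Real.exp (γ * (T - s)) - 1) + 2 * γ)
        ((α + γ) * (E * (-γ))) t :=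
      (((hexp.sub_const 1).const_mul (α + γ)).add_const (2 * γ))
    have hquot := hnum.div hden (ne_of_gt hD)
    have hBfun : B = fun s : ℝ => 2 * (Real.exp (γ * (T - s)) - 1) /
        ((α + γ) * (Real.exp (γ * (T - s)) - 1) + 2 * γ) := funext hB
    rw [hBfun]
    convert hquot using 1
    case e'_4 => rfl
    case e'_5 => rfl
    case e'_8 => rfl
    simp only [← hE]
    have hDne : (α + γ) * (E - 1) + 2 * γ ≠ 0 := ne_of_gt (by simpa [← hE] using hD)
    have step1 : 1 / 2 * η ^ 2 * (2 * (E - 1) / ((α + γ) * (E - 1) + 2 * γ)) ^ 2 +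
        α * (2 * (E - 1) / ((α + γ) * (E - 1) + 2 * γ)) - 1 =
        (2 * η ^ 2 * (E - 1) ^ 2 + 2 * α * (E - 1) * ((α + γ) * (E - 1) + 2 * γ)
          - ((α + γ) * (E - 1) + 2 * γ) ^ 2) / ((α + γ) * (E - 1) + 2 * γ) ^ 2 := by
      generalize (α + γ) * (E - 1) + 2 * γ = D at hDne ⊢
      field_simp
    have step2 : 2 * η ^ 2 * (E - 1) ^ 2 + 2 * α * (E - 1) * ((α + γ) * (E - 1) + 2 * γ)
          - ((α + γ) * (E - 1) + 2 * γ) ^ 2 =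
        2 * (E * -γ) * ((α + γ) * (E - 1) + 2 * γ) - 2 * (E - 1) * ((α + γ) * (E * -γ)) := by
      linear_combination (-(E - 1) ^ 2) * hγ2
    rw [step1, step2]
  · rw [hB T]
    simp
end

section
/- Let α ≥ 0, β ∈ ℝ, η > 0, T ∈ ℝ, γ = √(α² + 2η²), and define B(t) = 2(e^{γ(T−t)} − 1) / ((α + γ)(e^{γ(T−t)} − 1) + 2γ) and A(t) = (2αβ/η²) · ln( 2γ e^{(γ+α)(T−t)/2} / ((α + γ)(e^{γ(T−t)} − 1) + 2γ) ). Then A is differentiable on ℝ, satisfies A′(t) = αβ B(t) for all t ∈ ℝ, and A(T) = 0. -/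
/-- The CIR coefficient `A(t) = (2αβ/η²) ln(2γ e^{(γ+α)(T−t)/2} / ((α+γ)(e^{γ(T−t)}−1)+2γ))`
is differentiable on `ℝ`, satisfies `A′(t) = αβ B(t)`, and `A(T) = 0`. -/
theorem cir_A_ode (α β η T : ℝ) (hα : 0 ≤ α) (hη : 0 < η)
    (γ : ℝ) (hγ : γ = Real.sqrt (α ^ 2 + 2 * η ^ 2))
    (B A : ℝ → ℝ)
    (hB : ∀ t : ℝ, B t = 2 * (Real.exp (γ * (T - t)) - 1) /
      ((α + γ) * (Real.exp (γ * (T - t)) - 1) + 2 * γ))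
    (hA : ∀ t : ℝ, A t = (2 * α * β / η ^ 2) *
      Real.log (2 * γ * Real.exp ((γ + α) * (T - t) / 2) /
        ((α + γ) * (Real.exp (γ * (T - t)) - 1) + 2 * γ))) :
    (∀ t : ℝ, HasDerivAt A (α * β * B t) t) ∧ A T = 0 := by
  have hγ2 : γ ^ 2 = α ^ 2 + 2 * η ^ 2 := by
    rw [hγ, Real.sq_sqrt]; positivity
  have hγpos : 0 < γ := by
    rw [hγ]; apply Real.sqrt_pos.2; positivity
  have hαγ : α < γ := by
    nlinarith [sq_nonneg η]
  have hD : ∀ t : ℝ, 0 < (α + γ) * (Real.exp (γ * (T - t)) - 1) + 2 * γ := by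
    intro t
    have he : 0 < Real.exp (γ * (T - t)) := Real.exp_pos _
    nlinarith
  have hAeq : ∀ t : ℝ, A t = (2 * α * β / η ^ 2) *
      (Real.log (2 * γ) + (γ + α) * (T - t) / 2 -
        Real.log ((α + γ) * (Real.exp (γ * (T - t)) - 1) + 2 * γ)) := by
    intro t
    rw [hA t, Real.log_div (by positivity) (ne_of_gt (hD t)), Real.log_mul (by positivity)
      (ne_of_gt (Real.exp_pos _)), Real.log_exp]
  have hAfun : A = fun t => (2 * α * β / η ^ 2) *
      (Real.log (2 * γ) + (γ + α) * (T - t) / 2 -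
        Real.log ((α + γ) * (Real.exp (γ * (T - t)) - 1) + 2 * γ)) := funext hAeq
  constructor
  · intro t
    set e := Real.exp (γ * (T - t)) with he
    set D := (α + γ) * (e - 1) + 2 * γ with hDdef
    have hDt : 0 < D := hD t
    have hinner : HasDerivAt (fun t : ℝ => γ * (T - t)) (γ * (-1)) t :=
      ((hasDerivAt_id t).const_sub T).const_mul γ
    have hexp : HasDerivAt (fun t : ℝ => Real.exp (γ * (T - t))) (e * (γ * (-1))) t := by
      simpa [he, mul_comm] using hinner.exp
    have hDder : HasDerivAt (fun t : ℝ => (α + γ) * (Real.exp (γ * (T - t)) - 1) + 2 * γ)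
        ((α + γ) * (e * (γ * (-1)))) t :=
      ((hexp.sub_const 1).const_mul (α + γ)).add_const (2 * γ)
    have hlog : HasDerivAt (fun t : ℝ => Real.log ((α + γ) * (Real.exp (γ * (T - t)) - 1) + 2 * γ))
        ((α + γ) * (e * (γ * (-1))) / D) t := hDder.log (ne_of_gt hDt)
    have hlin : HasDerivAt (fun t : ℝ => Real.log (2 * γ) + (γ + α) * (T - t) / 2)
        ((γ + α) * (-1) / 2) t :=
      ((((hasDerivAt_id t).const_sub T).const_mul (γ + α)).div_const 2).const_add _
    have hmain := (hlin.sub hlog).const_mul (2 * α * β / η ^ 2)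
    rw [hAfun, hB t]
    convert hmain using 1
    · rfl
    · rfl
    · rfl
    rw [← he]
    have hη' : η ≠ 0 := ne_of_gt hη
    have hD' : (e - 1) * (α + γ) + 2 * γ ≠ 0 := ne_of_gt (by linarith [hDdef])
    rw [hDdef]
    field_simp
    linear_combination (-(α*β*(e-1))) * hγ2
  · rw [hA T, sub_self]
    simp only [mul_zero, zero_div, Real.exp_zero, mul_one, sub_self, zero_add]
    rw [div_self (by positivity : (2*γ:ℝ) ≠ 0)]
    simp
end

section
/- Let α ≥ 0, β ∈ ℝ, η > 0, T ∈ ℝ, γ = √(α² + 2η²), and define B(t) = 2(e^{γ(T−t)} − 1) / ((α + γ)(e^{γ(T−t)} − 1) + 2γ), A(t) = (2αβ/η²) · ln( 2γ e^{(γ+α)(T−t)/2} / ((α + γ)(e^{γ(T−t)} − 1) + 2γ) ), and Z(R,t) = exp(A(t) − B(t)R). Then for all R ∈ ℝ and t ∈ ℝ, Z satisfies the zero-coupon bond pricing partial differential equation ∂Z/∂t (R,t) + (1/2)η² R · ∂²Z/∂R² (R,t) + α(β − R) · ∂Z/∂R (R,t) − R·Z(R,t) = 0, together with the terminal condition Z(R,T)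 = 1 for every R ∈ ℝ. -/
/-- The closed form `Z(R,t) = exp(A(t) − B(t)R)` solves the Cox–Ingersoll–Ross
zero-coupon bond PDE `∂Z/∂t + (1/2)η²R ∂²Z/∂R² + α(β − R) ∂Z/∂R − RZ = 0`
with terminal condition `Z(R,T) = 1`. -/
theorem cir_bond_pde (α β η T : ℝ) (hα : 0 ≤ α) (hη : 0 < η)
    (γ : ℝ) (hγ : γ = Real.sqrt (α ^ 2 + 2 * η ^ 2))
    (B A : ℝ → ℝ) (Z : ℝ → ℝ → ℝ)
    (hB : ∀ t : ℝ, B t = 2 * (Real.exp (γ * (T - t)) - 1) /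
      ((α + γ) * (Real.exp (γ * (T - t)) - 1) + 2 * γ))
    (hA : ∀ t : ℝ, A t = (2 * α * β / η ^ 2) *
      Real.log (2 * γ * Real.exp ((γ + α) * (T - t) / 2) /
        ((α + γ) * (Real.exp (γ * (T - t)) - 1) + 2 * γ)))
    (hZ : ∀ R t : ℝ, Z R t = Real.exp (A t - B t * R)) :
    (∀ R t : ℝ,
        deriv (fun s => Z R s) t
          + (1 / 2) * η ^ 2 * R * deriv (deriv (fun r => Z r t)) R
          + α * (β - R) * deriv (fun r => Z r t) R
          - R * Z R t = 0) ∧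
      ∀ R : ℝ, Z R T = 1 := by
  have hγ2 : γ ^ 2 = α ^ 2 + 2 * η ^ 2 := by
    rw [hγ]; exact Real.sq_sqrt (by positivity)
  have hγpos : 0 < γ := by
    rw [hγ]; positivity
  have hαγ : α < γ := by nlinarith [hη]
  have hD : ∀ t : ℝ, 0 < (α + γ) * (Real.exp (γ * (T - t)) - 1) + 2 * γ := by
    intro t
    nlinarith [Real.exp_pos (γ * (T - t)), mul_pos (by linarith : (0:ℝ) < α + γ) (Real.exp_pos (γ * (T - t)))]
  have hEd : ∀ t : ℝ, HasDerivAt (fun t => Real.exp (γ * (T - t)))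
      (-γ * Real.exp (γ * (T - t))) t := by
    intro t
    have h1 : HasDerivAt (fun s : ℝ => γ * (T - s)) (-γ) t := by
      have := ((hasDerivAt_id t).const_sub T).const_mul γ
      simpa using this
    simpa [mul_comm] using h1.exp
  have hDd : ∀ t : ℝ, HasDerivAt (fun t => (α + γ) * (Real.exp (γ * (T - t)) - 1) + 2 * γ)
      ((α + γ) * (-γ * Real.exp (γ * (T - t)))) t := by
    intro t
    exact (((hEd t).sub_const 1).const_mul (α + γ)).add_const _
  have hBt : ∀ t : ℝ, HasDerivAt B ((1/2) * η ^ 2 * (B t) ^ 2 + α * B t - 1) t := by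
    intro t
    have hBe : B = fun t => 2 * (Real.exp (γ * (T - t)) - 1) /
        ((α + γ) * (Real.exp (γ * (T - t)) - 1) + 2 * γ) := funext hB
    have hnum : HasDerivAt (fun t => 2 * (Real.exp (γ * (T - t)) - 1))
        (2 * (-γ * Real.exp (γ * (T - t)))) t := ((hEd t).sub_const 1).const_mul 2
    have hq := hnum.div (hDd t) (hD t).ne'
    rw [hBe]
    refine hq.congr_deriv ?_
    have hd := (hD t).ne'
    have hη2 : η ^ 2 = (γ ^ 2 - α ^ 2) / 2 := by linarith
    rw [hη2]
    field_simp
    ring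
  have hAt : ∀ t : ℝ, HasDerivAt A (α * β * B t) t := by
    intro t
    have hAe : A = fun t => (2 * α * β / η ^ 2) * (Real.log (2 * γ) +
        (γ + α) * (T - t) / 2 -
        Real.log ((α + γ) * (Real.exp (γ * (T - t)) - 1) + 2 * γ)) := by
      funext t
      rw [hA t, Real.log_div (by positivity) (hD t).ne',
        Real.log_mul (by positivity) (Real.exp_ne_zero _), Real.log_exp]
    have hlin : HasDerivAt (fun s : ℝ => (γ + α) * (T - s) / 2) (-(γ + α) / 2) t := by
      have := (((hasDerivAt_id t).const_sub T).const_mul (γ + α)).div_const 2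
      simpa using this
    have hlog : HasDerivAt (fun t => Real.log ((α + γ) * (Real.exp (γ * (T - t)) - 1) + 2 * γ))
        ((α + γ) * (-γ * Real.exp (γ * (T - t))) /
          ((α + γ) * (Real.exp (γ * (T - t)) - 1) + 2 * γ)) t := (hDd t).log (hD t).ne'
    have h := (((hasDerivAt_const t (Real.log (2 * γ))).add hlin).sub hlog).const_mul
      (2 * α * β / η ^ 2)
    rw [hAe]
    refine h.congr_deriv ?_
    rw [hB t]
    have hd := (hD t).ne'
    have hη2 : η ^ 2 = (γ ^ 2 - α ^ 2) / 2 := by linarith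
    have hne : γ ^ 2 - α ^ 2 ≠ 0 := by nlinarith
    rw [hη2]
    field_simp
    ring
  constructor
  · intro R t
    simp only [hZ]
    have hZt : HasDerivAt (fun s => Real.exp (A s - B s * R))
        ((α * β * B t - ((1/2) * η ^ 2 * (B t) ^ 2 + α * B t - 1) * R) *
          Real.exp (A t - B t * R)) t := by
      have := ((hAt t).sub ((hBt t).mul_const R)).exp
      refine this.congr_deriv ?_
      simp only [Pi.sub_apply]
      ring
    have hZR : ∀ r : ℝ, HasDerivAt (fun r => Real.exp (A t - B t * r))
        (-B t * Real.exp (A t - B t * r)) r := by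
      intro r
      have h1 : HasDerivAt (fun x : ℝ => A t - B t * x) (-B t) r := by
        have := ((hasDerivAt_id r).const_mul (B t)).const_sub (A t)
        simpa using this
      simpa [mul_comm] using h1.exp
    have hderiv1 : deriv (fun r => Real.exp (A t - B t * r)) =
        fun r => -B t * Real.exp (A t - B t * r) := funext fun r => (hZR r).deriv
    have hZRR : HasDerivAt (fun r => -B t * Real.exp (A t - B t * r))
        ((B t) ^ 2 * Real.exp (A t - B t * R)) R := by
      have := (hZR R).const_mul (-B t)
      refine this.congr_deriv ?_
      ring
    rw [hZt.deriv, (hZR R).deriv, hderiv1, hZRR.deriv]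
    ring
  · intro R
    have h2γ : (2:ℝ) * γ ≠ 0 := by positivity
    rw [hZ, hB, hA]
    simp [div_self h2γ]
end
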